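/- arXiv:1704.06730 — 2 statements merged into one kernel-verified Lean document; each statement's English description precedes it below -/
import Mathlib

section
/- Let Δ ≥ 4, or Δ = 3 and k ≥ 4. Let X be the k×k symmetric tridiagonal matrix with diagonal entries (0, 0, ..., 0, 2), off-diagonal entries X_{i,i+1} = √(Δ−1) for 1 ≤ i ≤ k−2, and X_{k−1,k} = √(Δ−2). Then ρ(X) < 2√(Δ−1)·cos(π/(2k+1)). -/
open Matrix Real Polynomial
set_option maxHeartbeats 1600000

noncomputable def specRad {m : Type*} [Fintype m] [DecidableEq m]
    (A : Matrix m m ℝ) : ℝ :=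
  ((A.charpoly.aroots ℂ).map (fun z => ‖z‖)).foldr max 0

lemma charpoly_eval' {n : Type*} [Fintype n] [DecidableEq n] {R : Type*} [CommRing R]
    (M : Matrix n n R) (r : R) : M.charpoly.eval r = (Matrix.scalar n r - M).det := by
  rw [Matrix.charpoly, eval_det, matPolyEquiv_charmatrix]
  simp

lemma foldr_max_lt (l : Multiset ℝ) (ρ : ℝ) (h0 : 0 < ρ) (h : ∀ x ∈ l, x < ρ) :
    l.foldr max 0 < ρ := by
  induction l using Multiset.induction with
  | empty => simpa using h0
  | cons a t ih =>
      rw [Multiset.foldr_cons]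
      exact max_lt (h a (by simp)) (ih fun x hx => h x (Multiset.mem_cons_of_mem hx))

lemma specRad_lt_of_pos_vec {k : ℕ} (hk : 0 < k) (A : Matrix (Fin k) (Fin k) ℝ)
    (hA : ∀ i j, 0 ≤ A i j) (v : Fin k → ℝ) (hv : ∀ i, 0 < v i) (ρ : ℝ) (hρ : 0 < ρ)
    (h : ∀ i, ∑ j, A i j * v j < ρ * v i) : specRad A < ρ := by
  apply foldr_max_lt _ _ hρ
  intro x hx
  rw [Multiset.mem_map] at hx
  obtain ⟨z, hz, rfl⟩ := hx
  rw [Polynomial.mem_aroots] at hz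
  obtain ⟨-, hz⟩ := hz
  -- z is an eigenvalue of A.map coe
  have hdet : (Matrix.scalar (Fin k) z - A.map (algebraMap ℝ ℂ)).det = 0 := by
    have : ((A.map (algebraMap ℝ ℂ)).charpoly).eval z = 0 := by
      rw [Matrix.charpoly_map, Polynomial.eval_map, ← Polynomial.aeval_def]
      exact hz
    rwa [charpoly_eval'] at this
  obtain ⟨u, hu0, hu⟩ := (Matrix.exists_mulVec_eq_zero_iff).2 hdet
  have heig : ∀ i, z * u i = ∑ j, (algebraMap ℝ ℂ) (A i j) * u j := by
    intro i
    have h0 := congrFun hu i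
    simp only [Matrix.mulVec, dotProduct, Matrix.sub_apply, Matrix.scalar_apply,
      Matrix.diagonal_apply, Matrix.map_apply, Pi.zero_apply, sub_mul, ite_mul, zero_mul,
      Finset.sum_sub_distrib, Finset.sum_ite_eq, Finset.mem_univ, if_true, sub_eq_zero] at h0
    exact h0
  -- pick maximizer of |u i| / v i
  obtain ⟨i₀, -, hi₀⟩ := Finset.exists_max_image (Finset.univ : Finset (Fin k))
    (fun i => ‖u i‖ / v i) ⟨⟨0, hk⟩, Finset.mem_univ _⟩
  set m := ‖u i₀‖ / v i₀ with hm
  have hub : ∀ j, ‖u j‖ ≤ m * v j := by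
    intro j
    have := hi₀ j (Finset.mem_univ j)
    rw [div_le_iff₀ (hv j)] at this
    linarith [this]
  have hmpos : 0 < m := by
    obtain ⟨j, hj⟩ := Function.ne_iff.1 hu0
    have : 0 < ‖u j‖ := by
      simpa [norm_pos_iff] using hj
    have h2 := hi₀ j (Finset.mem_univ j)
    calc (0:ℝ) < ‖u j‖ / v j := div_pos this (hv j)
      _ ≤ m := h2
  have hui : ‖u i₀‖ = m * v i₀ := by
    rw [hm, div_mul_cancel₀ _ (hv i₀).ne']
  have key : ‖z‖ * ‖u i₀‖ < ρ * ‖u i₀‖ := by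
    have h1 : ‖z‖ * ‖u i₀‖ = ‖∑ j, (algebraMap ℝ ℂ) (A i₀ j) * u j‖ := by
      rw [show ‖z‖ * ‖u i₀‖ = ‖z * u i₀‖ from
        (norm_mul z (u i₀)).symm, heig i₀]
    have h2 : ‖∑ j, (algebraMap ℝ ℂ) (A i₀ j) * u j‖ ≤
        ∑ j, A i₀ j * ‖u j‖ := by
      refine (norm_sum_le _ _).trans ?_
      apply Finset.sum_le_sum
      intro j _
      rw [show ‖(algebraMap ℝ ℂ) (A i₀ j) * u j‖ =
        ‖(algebraMap ℝ ℂ) (A i₀ j)‖ * ‖u j‖ from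
        norm_mul _ _]
      have : ‖(algebraMap ℝ ℂ) (A i₀ j)‖ = A i₀ j := by
        simp [abs_of_nonneg (hA i₀ j)]
      rw [this]
    have h3 : ∑ j, A i₀ j * ‖u j‖ ≤ ∑ j, A i₀ j * (m * v j) := by
      apply Finset.sum_le_sum
      intro j _
      exact mul_le_mul_of_nonneg_left (hub j) (hA i₀ j)
    have h4 : ∑ j, A i₀ j * (m * v j) = m * ∑ j, A i₀ j * v j := by
      rw [Finset.mul_sum]; congr 1; funext j; ring
    have h5 : m * ∑ j, A i₀ j * v j < m * (ρ * v i₀) :=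
      (mul_lt_mul_iff_right₀ hmpos).2 (h i₀)
    rw [h1, hui]
    calc ‖∑ j, (algebraMap ℝ ℂ) (A i₀ j) * u j‖ ≤ ∑ j, A i₀ j * (m * v j) :=
        h2.trans h3
      _ < m * (ρ * v i₀) := by rw [h4]; exact h5
      _ = ρ * (m * v i₀) := by ring
  have hupos : 0 < ‖u i₀‖ := by rw [hui]; exact mul_pos hmpos (hv i₀)
  exact lt_of_mul_lt_mul_right (by linarith [key]) hupos.le




lemma cos_lb_rat {x b : ℝ} (h0 : 0 ≤ x) (hb : x ≤ b) (hb1 : b ≤ 1) :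
    1 - b^2/2 - b^4*(5/96) ≤ Real.cos x := by
  have hx1 : x ≤ 1 := hb.trans hb1
  have h := Real.cos_bound (x := x) (by rwa [abs_of_nonneg h0])
  rw [abs_of_nonneg h0] at h
  have h2 := (abs_le.1 h).1
  have hsq : x^2 ≤ b^2 := by nlinarith
  have hq : x^4 ≤ b^4 := pow_le_pow_left₀ h0 hb 4
  linarith

lemma cos_ub_rat {x a b : ℝ} (h0 : 0 ≤ a) (ha : a ≤ x) (hb : x ≤ b) (hb1 : b ≤ 1) :
    Real.cos x ≤ 1 - a^2/2 + b^4*(5/96) := by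
  have h0x : 0 ≤ x := h0.trans ha
  have h := Real.cos_bound (x := x) (by rw [abs_of_nonneg h0x]; exact hb.trans hb1)
  rw [abs_of_nonneg h0x] at h
  have h2 := (abs_le.1 h).2
  have hsq : a^2 ≤ x^2 := by nlinarith
  have hq : x^4 ≤ b^4 := pow_le_pow_left₀ h0x hb 4
  linarith

lemma cos_2pi13 : (0.88:ℝ) ≤ Real.cos (2*π/13) := by
  have hπ2 : π < 3.141593 := Real.pi_lt_d6
  have h0 : (0:ℝ) ≤ 2*π/13 := by positivity
  have := cos_lb_rat h0 (show (2*π/13:ℝ) ≤ 0.48333 by linarith) (by norm_num)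
  nlinarith

lemma cos_pi11 : (0.9588:ℝ) ≤ Real.cos (π/11) := by
  have hπ2 : π < 3.141593 := Real.pi_lt_d6
  have h0 : (0:ℝ) ≤ π/11 := by positivity
  have := cos_lb_rat h0 (show (π/11:ℝ) ≤ 0.285600 by linarith) (by norm_num)
  nlinarith

lemma cos_pi34 : (0.9957:ℝ) ≤ Real.cos (π/34) := by
  have hπ2 : π < 3.141593 := Real.pi_lt_d6
  have h0 : (0:ℝ) ≤ π/34 := by positivity
  have := cos_lb_rat h0 (show (π/34:ℝ) ≤ 0.0924 by linarith) (by norm_num)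
  nlinarith

lemma cos_5pi34 : Real.cos (5*π/34) ≤ 0.8957 := by
  have hπ1 : (3.141592:ℝ) < π := Real.pi_gt_d6
  have hπ2 : π < 3.141593 := Real.pi_lt_d6
  have := cos_ub_rat (x := 5*π/34) (a := 0.46199) (b := 0.46200)
    (by norm_num) (by linarith) (by linarith) (by norm_num)
  nlinarith


lemma sqrt_le_num {a b : ℝ} (hb : 0 ≤ b) (h : a ≤ b^2) : Real.sqrt a ≤ b := by
  rw [show b = Real.sqrt (b^2) from (Real.sqrt_sq hb).symm]
  exact Real.sqrt_le_sqrt h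




lemma sqrt_ge_num {a b : ℝ} (hb : 0 ≤ b) (h : b^2 ≤ a) : b ≤ Real.sqrt a := by
  rw [show b = Real.sqrt (b^2) from (Real.sqrt_sq hb).symm]
  exact Real.sqrt_le_sqrt h

lemma cos_pi9_bounds : (0.9396:ℝ) < Real.cos (π/9) ∧ Real.cos (π/9) < 0.94 := by
  set c := Real.cos (π/9) with hc
  have heq : 4*c^3 - 3*c = 1/2 := by
    have h3 : Real.cos (3*(π/9)) = 4*c^3 - 3*c := Real.cos_three_mul _
    rw [show 3*(π/9) = π/3 by ring, Real.cos_pi_div_three] at h3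
    linarith
  have hc1 : c ≤ 1 := Real.cos_le_one _
  have hc2 : (1/2:ℝ) ≤ c := by
    rw [← Real.cos_pi_div_three]
    apply Real.cos_le_cos_of_nonneg_of_le_pi (by positivity)
      (by linarith [Real.pi_pos]) (by linarith [Real.pi_pos])
  constructor
  · nlinarith [sq_nonneg (c - 0.9396), sq_nonneg (c - 0.7), sq_nonneg (c+0.94)]
  · nlinarith [sq_nonneg (c - 0.94), sq_nonneg (c - 0.7), sq_nonneg (c+0.94)]

lemma sin_pi9_bounds : (0.3411:ℝ) < Real.sin (π/9) ∧ Real.sin (π/9) < 0.3423 := by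
  have hpyth := Real.sin_sq_add_cos_sq (π/9)
  have hc := cos_pi9_bounds
  have hs : 0 < Real.sin (π/9) := by
    apply Real.sin_pos_of_pos_of_lt_pi (by positivity) (by linarith [Real.pi_pos])
  constructor
  · nlinarith [hc.1, hc.2]
  · nlinarith [hc.1, hc.2]

lemma keyA (Δ : ℝ) (hΔ : 4 ≤ Δ) :
    (Δ-2) * Real.cos (5*π/18) <
    (2*(Δ-1)*Real.cos (π/5) - 2*Real.sqrt (Δ-1)) * Real.cos (π/18) := by
  have hc := cos_pi9_bounds
  have hs := sin_pi9_bounds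
  set c := Real.cos (π/9)
  set s := Real.sin (π/9)
  have h1 : Real.cos (5*π/18) = 2*s*c := by
    rw [show 5*π/18 = π/2 - 2*(π/9) by ring, Real.cos_pi_div_two_sub, Real.sin_two_mul]
  have h2 : Real.cos (π/18) = 2*(2*s*c)*(2*c^2-1) := by
    rw [show π/18 = π/2 - 2*(2*(π/9)) by ring, Real.cos_pi_div_two_sub,
      Real.sin_two_mul, Real.sin_two_mul, Real.cos_two_mul]
  have hcos5 : Real.cos (π/5) = (1+Real.sqrt 5)/4 := Real.cos_pi_div_five
  set t := Real.sqrt (Δ-1) with ht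
  have ht2 : t^2 = Δ-1 := Real.sq_sqrt (by linarith)
  have ht3 : (1.73205:ℝ) ≤ t := by
    apply sqrt_ge_num (by norm_num); nlinarith
  have h5 : (2.23606:ℝ) ≤ Real.sqrt 5 := sqrt_ge_num (by norm_num) (by norm_num)
  have hsc : (0.32049:ℝ) ≤ s*c := by
    nlinarith [mul_nonneg (by linarith [hs.1] : (0:ℝ) ≤ s - 0.3411)
      (by linarith [hc.1] : (0:ℝ) ≤ c - 0.9396)]
  have h2c : (0.76569:ℝ) ≤ 2*c^2-1 := by nlinarith [hc.1]
  have hU : 2*s*c ≤ 0.6436 := by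
    nlinarith [mul_nonneg (by linarith [hs.1] : (0:ℝ) ≤ s - 0.3411)
      (by linarith [hc.2] : (0:ℝ) ≤ 0.94 - c), hs.2]
  have hL : (0.9815:ℝ) ≤ 2*(2*s*c)*(2*c^2-1) := by
    nlinarith [mul_nonneg (by linarith [hsc] : (0:ℝ) ≤ s*c - 0.32049)
      (by linarith [h2c] : (0:ℝ) ≤ (2*c^2-1) - 0.76569)]
  rw [h1, h2, hcos5, show 2*(Δ-1)*((1+Real.sqrt 5)/4) = (1+Real.sqrt 5)/2*t^2 by
    rw [ht2]; ring]
  have hmid : 0.6436*(t^2-1) < ((1+Real.sqrt 5)/2*t^2 - 2*t)*0.9815 := by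
    nlinarith [sq_nonneg (t - 1.73205), mul_nonneg (sub_nonneg.2 ht3) (sub_nonneg.2 h5),
      mul_nonneg (mul_nonneg (sub_nonneg.2 ht3) (sub_nonneg.2 ht3)) (sub_nonneg.2 h5)]
  have hpos : 0 ≤ (1+Real.sqrt 5)/2*t^2 - 2*t := by nlinarith
  have hΔ2 : (0:ℝ) ≤ Δ - 2 := by linarith
  calc (Δ-2) * (2*s*c) ≤ (Δ-2) * 0.6436 := mul_le_mul_of_nonneg_left hU hΔ2
    _ = 0.6436*(t^2-1) := by rw [ht2]; ring
    _ < ((1+Real.sqrt 5)/2*t^2 - 2*t)*0.9815 := hmid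
    _ ≤ ((1+Real.sqrt 5)/2*t^2 - 2*t)*(2*(2*s*c)*(2*c^2-1)) :=
        mul_le_mul_of_nonneg_left hL hpos


lemma cos_2pi21 : (0.9548:ℝ) ≤ Real.cos (2*π/21) := by
  have hπ2 : π < 3.141593 := Real.pi_lt_d6
  have h0 : (0:ℝ) ≤ 2*π/21 := by positivity
  have h := Real.cos_bound (x := 2*π/21) (by rw [abs_of_nonneg h0]; linarith)
  rw [abs_of_nonneg h0] at h
  have h2 := (abs_le.1 h).1
  have hb : (2*π/21:ℝ) ≤ 0.29921 := by linarith
  have hsq : (2*π/21)^2 ≤ 0.29921^2 := by nlinarith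
  have hq : (2*π/21)^4 ≤ 0.29921^4 := pow_le_pow_left₀ h0 hb 4
  nlinarith

lemma keyC_chain (Δ θ φ : ℝ) (hΔ2 : 0 < Δ - 2) (h0θ : 0 < θ) (hθφ : θ < φ) (hφ2 : φ < π/2)
    (hA : 2*Real.sqrt (Δ-1) ≤ Δ * Real.cos φ) :
    (Δ-2) * Real.cos (5*φ/4) < (2*(Δ-1)*Real.cos θ - 2*Real.sqrt (Δ-1)) * Real.cos (φ/4) := by
  have hπ := Real.pi_pos
  have hφpos : 0 < φ := h0θ.trans hθφ
  have hcosφθ : Real.cos φ < Real.cos θ :=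
    Real.cos_lt_cos_of_nonneg_of_le_pi h0θ.le (by linarith) hθφ
  have hsinφ : 0 < Real.sin φ := Real.sin_pos_of_pos_of_lt_pi hφpos (by linarith)
  have hsinφ4 : 0 < Real.sin (φ/4) := Real.sin_pos_of_pos_of_lt_pi (by linarith) (by linarith)
  have hcosφ4 : 0 < Real.cos (φ/4) := Real.cos_pos_of_mem_Ioo ⟨by linarith, by linarith⟩
  have hstep1 : Real.cos (5*φ/4) < Real.cos φ * Real.cos (φ/4) := by
    rw [show 5*φ/4 = φ + φ/4 by ring, Real.cos_add]
    nlinarith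
  set t := Real.sqrt (Δ-1) with ht
  calc (Δ-2) * Real.cos (5*φ/4) < (Δ-2) * (Real.cos φ * Real.cos (φ/4)) :=
        (mul_lt_mul_iff_right₀ hΔ2).2 hstep1
    _ = ((Δ-2) * Real.cos φ) * Real.cos (φ/4) := by ring
    _ ≤ (2*(Δ-1)*Real.cos φ - 2*t) * Real.cos (φ/4) := by
        apply mul_le_mul_of_nonneg_right _ hcosφ4.le
        nlinarith
    _ < (2*(Δ-1)*Real.cos θ - 2*t) * Real.cos (φ/4) := by
        apply mul_lt_mul_of_pos_right _ hcosφ4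
        nlinarith

lemma keyC (Δ : ℝ) (k : ℕ) (hk : 2 ≤ k) (hΔk : 4 ≤ Δ ∨ (Δ = 3 ∧ 4 ≤ k)) :
    (Δ-2) * Real.cos (5*(2*π/(4*(k:ℝ)+1))/4) <
    (2*(Δ-1)*Real.cos (π/(2*(k:ℝ)+1)) - 2*Real.sqrt (Δ-1)) *
      Real.cos ((2*π/(4*(k:ℝ)+1))/4) := by
  have hπ := Real.pi_pos
  have hK2 : (2:ℝ) ≤ (k:ℝ) := by exact_mod_cast hk
  have h0θ : 0 < π/(2*(k:ℝ)+1) := by positivity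
  have hθφ : π/(2*(k:ℝ)+1) < 2*π/(4*(k:ℝ)+1) := by
    rw [div_lt_div_iff₀ (by linarith) (by linarith)]
    nlinarith
  have hφ2 : 2*π/(4*(k:ℝ)+1) < π/2 := by
    rw [div_lt_div_iff₀ (by linarith) (by norm_num)]
    nlinarith
  rcases hΔk with hΔ | ⟨hΔ3, hk4⟩
  · rcases Nat.lt_or_ge k 3 with hk3 | hk3
    · have hkk : k = 2 := le_antisymm (by omega) hk
      subst hkk
      rw [show (5*(2*π/(4*((2:ℕ):ℝ)+1))/4) = 5*π/18 by push_cast; ring,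
        show ((2*π/(4*((2:ℕ):ℝ)+1))/4) = π/18 by push_cast; ring,
        show (π/(2*((2:ℕ):ℝ)+1)) = π/5 by push_cast; ring]
      exact keyA Δ hΔ
    · have hK3 : (3:ℝ) ≤ (k:ℝ) := by exact_mod_cast hk3
      apply keyC_chain Δ _ _ (by linarith) h0θ hθφ hφ2
      have hφ13 : 2*π/(4*(k:ℝ)+1) ≤ 2*π/13 := by
        rw [div_le_div_iff₀ (by linarith) (by norm_num)]
        nlinarith
      have hcosφlb : (0.88:ℝ) ≤ Real.cos (2*π/(4*(k:ℝ)+1)) :=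
        cos_2pi13.trans (Real.cos_le_cos_of_nonneg_of_le_pi (by positivity) (by linarith) hφ13)
      set t := Real.sqrt (Δ-1) with ht
      have ht2 : t^2 = Δ-1 := Real.sq_sqrt (by linarith)
      have ht3 : (1.73205:ℝ) ≤ t := by
        apply sqrt_ge_num (by norm_num); nlinarith
      nlinarith [sq_nonneg (t - 1.73205), hcosφlb]
  · subst hΔ3
    rcases Nat.lt_or_ge k 5 with hk5 | hk5
    · have hkk : k = 4 := le_antisymm (by omega) hk4
      subst hkk
      rw [show (5*(2*π/(4*((4:ℕ):ℝ)+1))/4) = 5*π/34 by push_cast; ring,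
        show ((2*π/(4*((4:ℕ):ℝ)+1))/4) = π/34 by push_cast; ring,
        show (π/(2*((4:ℕ):ℝ)+1)) = π/9 by push_cast; ring,
        show Real.sqrt (3-1) = Real.sqrt 2 by norm_num]
      have h2 : Real.sqrt 2 ≤ 1.41422 := sqrt_le_num (by norm_num) (by norm_num)
      have h2' : (0:ℝ) ≤ Real.sqrt 2 := Real.sqrt_nonneg 2
      have hc9 := cos_pi9_bounds.1
      have hc91 : Real.cos (π/9) ≤ 1 := Real.cos_le_one _
      calc (3-2) * Real.cos (5*π/34) ≤ 0.8957 := by linarith [cos_5pi34]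
        _ < (2*(3-1)*Real.cos (π/9) - 2*Real.sqrt 2) * 0.9957 := by nlinarith
        _ ≤ (2*(3-1)*Real.cos (π/9) - 2*Real.sqrt 2) * Real.cos (π/34) := by
            apply mul_le_mul_of_nonneg_left cos_pi34
            nlinarith
    · have hK5 : (5:ℝ) ≤ (k:ℝ) := by exact_mod_cast hk5
      apply keyC_chain _ _ _ (by norm_num) h0θ hθφ hφ2
      have hφ21 : 2*π/(4*(k:ℝ)+1) ≤ 2*π/21 := by
        rw [div_le_div_iff₀ (by linarith) (by norm_num)]
        nlinarith
      have hcosφlb : (0.9548:ℝ) ≤ Real.cos (2*π/(4*(k:ℝ)+1)) :=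
        cos_2pi21.trans (Real.cos_le_cos_of_nonneg_of_le_pi (by positivity) (by linarith) hφ21)
      have h2 : Real.sqrt (3-1) ≤ 1.41422 := by
        rw [show (3-1:ℝ) = 2 by norm_num]
        exact sqrt_le_num (by norm_num) (by norm_num)
      nlinarith




lemma tridiag_row_sum {k : ℕ} (X : Matrix (Fin k) (Fin k) ℝ) (v : Fin k → ℝ)
    (hzero : ∀ i j : Fin k, ¬((i:ℕ)+1 = (j:ℕ)) → ¬((j:ℕ)+1 = (i:ℕ)) → i ≠ j → X i j = 0)
    (i : Fin k) :
    ∑ j, X i j * v j =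
      (if h : 0 < (i:ℕ) then
        X i ⟨(i:ℕ)-1, by omega⟩ * v ⟨(i:ℕ)-1, by have := i.isLt; omega⟩ else 0)
      + X i i * v i
      + (if h : (i:ℕ)+1 < k then X i ⟨(i:ℕ)+1, h⟩ * v ⟨(i:ℕ)+1, h⟩ else 0) := by
  have key : ∀ j : Fin k, X i j * v j =
      (if (j:ℕ)+1 = (i:ℕ) then X i j * v j else 0)
      + (if j = i then X i j * v j else 0)
      + (if (i:ℕ)+1 = (j:ℕ) then X i j * v j else 0) := by
    intro j
    have hj := j.isLt; have hi := i.isLt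
    by_cases h1 : (j:ℕ)+1 = (i:ℕ) <;> by_cases h2 : j = i <;>
      by_cases h3 : (i:ℕ)+1 = (j:ℕ)
    · exact absurd (congrArg Fin.val h2) (by omega)
    · exact absurd (congrArg Fin.val h2) (by omega)
    · omega
    · simp [h1, h2, h3]
    · exact absurd (congrArg Fin.val h2) (by omega)
    · simp [h1, h2, h3]
    · simp [h1, h2, h3]
    · simp [h1, h2, h3, hzero i j h3 h1 (Ne.symm h2)]
  rw [Finset.sum_congr rfl (fun j _ => key j), Finset.sum_add_distrib, Finset.sum_add_distrib]
  congr 1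
  congr 1
  · -- left neighbor
    by_cases hi : 0 < (i:ℕ)
    · rw [dif_pos hi]
      have hlt : (i:ℕ)-1 < k := by have := i.isLt; omega
      have hcong : ∀ j : Fin k, (if (j:ℕ)+1 = (i:ℕ) then X i j * v j else 0)
          = (if j = ⟨(i:ℕ)-1, hlt⟩ then X i j * v j else 0) := by
        intro j
        congr 1
        simp only [Fin.ext_iff, eq_iff_iff]
        omega
      rw [Finset.sum_congr rfl (fun j _ => hcong j), Finset.sum_ite_eq' Finset.univ]
      simp
    · rw [dif_neg hi]
      apply Finset.sum_eq_zero
      intro j _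
      rw [if_neg (by omega)]
  · rw [Finset.sum_ite_eq' Finset.univ]
    simp
  · by_cases hi : (i:ℕ)+1 < k
    · rw [dif_pos hi]
      have hcong : ∀ j : Fin k, (if (i:ℕ)+1 = (j:ℕ) then X i j * v j else 0)
          = (if j = ⟨(i:ℕ)+1, hi⟩ then X i j * v j else 0) := by
        intro j
        congr 1
        simp only [Fin.ext_iff, eq_iff_iff]
        omega
      rw [Finset.sum_congr rfl (fun j _ => hcong j), Finset.sum_ite_eq' Finset.univ]
      simp
    · rw [dif_neg hi]
      apply Finset.sum_eq_zero
      intro j _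
      have := j.isLt
      rw [if_neg (by omega)]


theorem stmt8 (Δ : ℝ) (k : ℕ) (hk : 2 ≤ k)
    (hΔk : 4 ≤ Δ ∨ (Δ = 3 ∧ 4 ≤ k))
    (X : Matrix (Fin k) (Fin k) ℝ)
    (hX : ∀ i j : Fin k, X i j =
      if i = j then (if (i : ℕ) = k - 1 then 2 else 0)
      else if (i : ℕ) + 1 = (j : ℕ) ∨ (j : ℕ) + 1 = (i : ℕ) then
        (if (i : ℕ) = k - 1 ∨ (j : ℕ) = k - 1 then Real.sqrt (Δ - 2) else Real.sqrt (Δ - 1))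
      else 0) :
    specRad X < 2 * Real.sqrt (Δ - 1) * Real.cos (π / (2 * k + 1)) := by
  have hπ := Real.pi_pos
  have hΔ3 : (3:ℝ) ≤ Δ := by
    rcases hΔk with h | ⟨h, _⟩
    · linarith
    · exact h.ge
  have hK2 : (2:ℝ) ≤ (k:ℝ) := by exact_mod_cast hk
  set b := Real.sqrt (Δ-1) with hbdef
  set a := Real.sqrt (Δ-2) with hadef
  have hb : 0 < b := Real.sqrt_pos.2 (by linarith)
  have ha : 0 < a := Real.sqrt_pos.2 (by linarith)
  have hb2 : b^2 = Δ-1 := Real.sq_sqrt (by linarith)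
  have ha2 : a^2 = Δ-2 := Real.sq_sqrt (by linarith)
  set θ := π/(2*(k:ℝ)+1) with hθdef
  set φ := 2*π/(4*(k:ℝ)+1) with hφdef
  set c := b/a with hcdef
  have hc : 0 < c := div_pos hb ha
  have hca : c * a = b := div_mul_cancel₀ b ha.ne'
  have hθpos : 0 < θ := by rw [hθdef]; positivity
  have hφpos : 0 < φ := by rw [hφdef]; positivity
  have hθφ : θ < φ := by
    rw [hθdef, hφdef, div_lt_div_iff₀ (by linarith) (by linarith)]
    nlinarith
  have hkφ : (k:ℝ)*φ < π/2 := by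
    have e : (k:ℝ)*φ = 2*(k:ℝ)*π/(4*(k:ℝ)+1) := by rw [hφdef]; ring
    rw [e, div_lt_div_iff₀ (by linarith) (by norm_num)]
    nlinarith
  have hφ2 : φ < π/2 := by nlinarith
  have hcosθpos : 0 < Real.cos θ := Real.cos_pos_of_mem_Ioo ⟨by linarith, by linarith⟩
  have hcosφθ : Real.cos φ < Real.cos θ :=
    Real.cos_lt_cos_of_nonneg_of_le_pi hθpos.le (by linarith) hθφ
  have hkφeq : (k:ℝ)*φ = π/2 - φ/4 := by
    rw [hφdef]; field_simp; ring
  have hsinpos : ∀ n : ℕ, 1 ≤ n → n ≤ k → 0 < Real.sin ((n:ℝ)*φ) := by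
    intro n h1 h2
    have hn1 : (1:ℝ) ≤ (n:ℝ) := by exact_mod_cast h1
    have hnk : (n:ℝ) ≤ (k:ℝ) := by exact_mod_cast h2
    apply Real.sin_pos_of_pos_of_lt_pi
    · nlinarith
    · have : (n:ℝ)*φ ≤ (k:ℝ)*φ := by nlinarith
      linarith
  set v : Fin k → ℝ := fun i => (if (i:ℕ) = k-1 then c else 1) * Real.sin ((((i:ℕ):ℝ)+1)*φ)
    with hvdef
  have hsin1 : ∀ n : ℕ, n < k → 0 < Real.sin (((n:ℝ)+1)*φ) := by
    intro n hn
    have := hsinpos (n+1) (by omega) (by omega)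
    rwa [show (((n+1:ℕ)):ℝ) = (n:ℝ)+1 by push_cast; ring] at this
  have hv : ∀ i, 0 < v i := by
    intro i
    rw [hvdef]
    have := hsin1 (i:ℕ) i.isLt
    dsimp only
    split_ifs
    · exact mul_pos hc this
    · rw [one_mul]; exact this
  have hXnn : ∀ i j, 0 ≤ X i j := by
    intro i j
    rw [hX]
    split_ifs
    · norm_num
    · norm_num
    · exact ha.le
    · exact hb.le
    · exact le_refl 0
  have hzero : ∀ i j : Fin k, ¬((i:ℕ)+1 = (j:ℕ)) → ¬((j:ℕ)+1 = (i:ℕ)) → i ≠ j → X i j = 0 := by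
    intro i j h1 h2 hne
    rw [hX, if_neg hne, if_neg (by tauto)]
  have hρpos : 0 < 2*b*Real.cos θ := by positivity
  apply specRad_lt_of_pos_vec (by omega) X hXnn v hv _ hρpos
  intro i
  rw [tridiag_row_sum X v hzero i]
  have hve : ∀ (m : ℕ) (hm : m < k), v ⟨m, hm⟩
      = (if m = k-1 then c else 1) * Real.sin (((m:ℝ)+1)*φ) := fun m hm => rfl
  have hdiag : X i i = if (i:ℕ) = k-1 then 2 else 0 := by rw [hX]; simp
  have hik' := i.isLt
  have hXentry : ∀ (m : ℕ) (hm : m < k), ((m:ℕ)+1 = (i:ℕ) ∨ (i:ℕ)+1 = m) →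
      X i ⟨m, hm⟩ = if (i:ℕ) = k-1 ∨ m = k-1 then a else b := by
    intro m hm hadj
    rw [hX, if_neg (by simp only [Fin.ext_iff]; omega), if_pos (by simpa using by omega)]
  by_cases hik : (i:ℕ) = k-1
  · -- last row
    have hipos : 0 < (i:ℕ) := by omega
    rw [dif_pos hipos, dif_neg (by omega), hdiag, if_pos hik, hXentry _ _ (by omega),
      if_pos (Or.inl hik), hve, hve]
    rw [if_neg (by omega), if_pos hik, one_mul]
    have ecast1 : (((i:ℕ)-1 : ℕ):ℝ) + 1 = (k:ℝ) - 1 := by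
      have e1 : ((i:ℕ)-1:ℕ) = k-2 := by omega
      rw [e1, Nat.cast_sub hk]
      push_cast; ring
    have ecast2 : (((i:ℕ) : ℕ):ℝ) + 1 = (k:ℝ) := by
      have e1 : ((i:ℕ):ℕ) = k-1 := hik
      rw [e1, Nat.cast_sub (by omega : 1 ≤ k)]
      push_cast; ring
    rw [ecast1, ecast2]
    have hc5 : Real.sin (((k:ℝ)-1)*φ) = Real.cos (5*φ/4) := by
      rw [show ((k:ℝ)-1)*φ = π/2 - 5*φ/4 by rw [sub_mul, one_mul, hkφeq]; ring,
        Real.sin_pi_div_two_sub]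
    have hc4 : Real.sin ((k:ℝ)*φ) = Real.cos (φ/4) := by
      rw [hkφeq, Real.sin_pi_div_two_sub]
    rw [hc5, hc4]
    have hkey := keyC Δ k hk hΔk
    rw [← hθdef, ← hφdef, ← hbdef] at hkey
    have key2 : (a*Real.cos (5*φ/4) + 2*(c*Real.cos (φ/4)) + 0) * a
        < (2*b*Real.cos θ*(c*Real.cos (φ/4))) * a := by
      have e1 : (a*Real.cos (5*φ/4) + 2*(c*Real.cos (φ/4)) + 0) * a
          = a^2*Real.cos (5*φ/4) + 2*(c*a)*Real.cos (φ/4) := by ring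
      have e2 : (2*b*Real.cos θ*(c*Real.cos (φ/4))) * a
          = 2*b*Real.cos θ*Real.cos (φ/4)*(c*a) := by ring
      rw [e1, e2, hca, ha2]
      have e3 : 2*b*Real.cos θ*Real.cos (φ/4)*b = 2*(Δ-1)*Real.cos θ*Real.cos (φ/4) := by
        rw [show 2*b*Real.cos θ*Real.cos (φ/4)*b = 2*(b^2)*Real.cos θ*Real.cos (φ/4) by ring,
          hb2]
      rw [e3]
      nlinarith [hkey]
    have hfin := lt_of_mul_lt_mul_right key2 ha.le
    linarith [hfin]
  · -- middle rows
    have hi1k : (i:ℕ)+1 < k := by omega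
    rw [dif_pos hi1k, hdiag, if_neg hik, zero_mul, hXentry _ _ (by omega), hve]
    have hmidrow : ∀ n : ℕ, n + 2 ≤ k →
        b*(Real.sin ((n:ℝ)*φ) + Real.sin (((n:ℝ)+2)*φ))
          < 2*b*Real.cos θ * Real.sin (((n:ℝ)+1)*φ) := by
      intro n hn
      have hid : Real.sin ((n:ℝ)*φ) + Real.sin (((n:ℝ)+2)*φ)
          = 2*Real.sin (((n:ℝ)+1)*φ)*Real.cos φ := by
        rw [show (n:ℝ)*φ = ((n:ℝ)+1)*φ - φ by ring,
          show ((n:ℝ)+2)*φ = ((n:ℝ)+1)*φ + φ by ring, Real.sin_sub, Real.sin_add]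
        ring
      rw [hid]
      have hsp := hsin1 n (by omega)
      nlinarith [mul_pos (mul_pos hb hsp) (sub_pos.2 hcosφθ)]
    have hmr := hmidrow (i:ℕ) (by omega)
    -- left term
    have hlefteq : (if h : 0 < (i:ℕ) then
        X i ⟨(i:ℕ)-1, by omega⟩ * v ⟨(i:ℕ)-1, by omega⟩ else 0)
        = b * Real.sin (((i:ℕ):ℝ)*φ) := by
      by_cases hn0 : 0 < (i:ℕ)
      · rw [dif_pos hn0, hXentry _ _ (by omega), hve,
          if_neg (by omega), if_neg (by omega), one_mul]
        congr 2
        rw [Nat.cast_sub (by omega : 1 ≤ (i:ℕ))]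
        push_cast; ring
      · rw [dif_neg hn0]
        have h0 : ((i:ℕ):ℝ) = 0 := by
          have : (i:ℕ) = 0 := by omega
          rw [this]; norm_num
        rw [h0]
        norm_num
    rw [hlefteq]
    -- right term
    by_cases hr : (i:ℕ)+1 = k-1
    · rw [if_pos (Or.inr hr), if_pos hr]
      have ecast : (((i:ℕ)+1 : ℕ):ℝ) + 1 = ((i:ℕ):ℝ) + 2 := by push_cast; ring
      rw [ecast]
      calc b * Real.sin (((i:ℕ):ℝ)*φ) + 0 + a * (c * Real.sin ((((i:ℕ):ℝ)+2)*φ))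
          = b*(Real.sin (((i:ℕ):ℝ)*φ) + Real.sin ((((i:ℕ):ℝ)+2)*φ)) := by
            rw [show a * (c * Real.sin ((((i:ℕ):ℝ)+2)*φ))
              = (c*a) * Real.sin ((((i:ℕ):ℝ)+2)*φ) by ring, hca]; ring
        _ < 2*b*Real.cos θ * Real.sin ((((i:ℕ):ℝ)+1)*φ) := hmr
        _ = 2*b*Real.cos θ * ((if (i:ℕ) = k-1 then c else 1) * Real.sin ((((i:ℕ):ℝ)+1)*φ)) := by
            rw [if_neg hik, one_mul]
    · rw [if_neg (by omega), if_neg hr, one_mul]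
      have ecast : (((i:ℕ)+1 : ℕ):ℝ) + 1 = ((i:ℕ):ℝ) + 2 := by push_cast; ring
      rw [ecast]
      calc b * Real.sin (((i:ℕ):ℝ)*φ) + 0 + b * Real.sin ((((i:ℕ):ℝ)+2)*φ)
          = b*(Real.sin (((i:ℕ):ℝ)*φ) + Real.sin ((((i:ℕ):ℝ)+2)*φ)) := by ring
        _ < 2*b*Real.cos θ * Real.sin ((((i:ℕ):ℝ)+1)*φ) := hmr
        _ = 2*b*Real.cos θ * ((if (i:ℕ) = k-1 then c else 1) * Real.sin ((((i:ℕ):ℝ)+1)*φ)) := by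
            rw [if_neg hik, one_mul]
end

section
/- There exists γ_0 ∈ (−0.25, −0.2) such that the spectral radius of the 3×3 symmetric matrix Z(γ_0) with rows (γ_0, √2, 0), (√2, 0, 1), (0, 1, 2) equals 2√2·cos(π/7). -/
open Matrix Real

/-- The 3×3 symmetric matrix Z(x) with rows (x, √2, 0), (√2, 0, 1), (0, 1, 2). -/
noncomputable def Zmat (x : ℝ) : Matrix (Fin 3) (Fin 3) ℝ :=
  !![x, Real.sqrt 2, 0; Real.sqrt 2, 0, 1; 0, 1, 2]

open Polynomial

lemma eval_cp (x t : ℝ) :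
    ((Zmat x).charpoly).eval t = (t - x) * (t^2 - 2*t - 1) - 2*t + 4 := by
  have h2 : Real.sqrt 2 * Real.sqrt 2 = 2 := Real.mul_self_sqrt (by norm_num)
  rw [Matrix.charpoly, ← Polynomial.coe_evalRingHom, RingHom.map_det]
  rw [Matrix.det_fin_three]
  simp [charmatrix_apply, Zmat, Matrix.one_apply]
  ring_nf

lemma sqrt2_bounds : 1.414213 < Real.sqrt 2 ∧ Real.sqrt 2 < 1.414214 := by
  have h2 : Real.sqrt 2 * Real.sqrt 2 = 2 := Real.mul_self_sqrt (by norm_num)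
  have hp : (0:ℝ) < Real.sqrt 2 := Real.sqrt_pos.2 (by norm_num)
  constructor <;> nlinarith

lemma cos7_cubic : 8 * Real.cos (π/7)^3 - 4 * Real.cos (π/7)^2 - 4 * Real.cos (π/7) + 1 = 0 := by
  have h : Real.cos (4 * (π/7)) = - Real.cos (3 * (π/7)) := by
    have : (4 : ℝ) * (π/7) = π - 3 * (π/7) := by ring
    rw [this, Real.cos_pi_sub]
  have h4 : Real.cos (4 * (π/7)) = 8 * Real.cos (π/7)^4 - 8 * Real.cos (π/7)^2 + 1 := by
    have := Real.cos_sq (2 * (π/7))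
    have h2 : Real.cos (2 * (π/7)) = 2 * Real.cos (π/7)^2 - 1 := by
      rw [Real.cos_two_mul]
    have h4' : Real.cos (4 * (π/7)) = 2 * Real.cos (2 * (π/7))^2 - 1 := by
      rw [show (4:ℝ) * (π/7) = 2 * (2 * (π/7)) by ring, Real.cos_two_mul]
    rw [h4', h2]; ring
  have h3 : Real.cos (3 * (π/7)) = 4 * Real.cos (π/7)^3 - 3 * Real.cos (π/7) := by
    rw [Real.cos_three_mul]
  have hne : Real.cos (π/7) + 1 ≠ 0 := by
    have := Real.cos_pos_of_mem_Ioo (show π/7 ∈ Set.Ioo (-(π/2)) (π/2) by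
      constructor <;> nlinarith [Real.pi_pos])
    nlinarith
  have key : (Real.cos (π/7) + 1) * (8 * Real.cos (π/7)^3 - 4 * Real.cos (π/7)^2 - 4 * Real.cos (π/7) + 1) = 0 := by
    nlinarith [h, h4, h3]
  rcases mul_eq_zero.1 key with h' | h'
  · exact absurd h' hne
  · exact h'

lemma cos7_bounds : 0.90096 < Real.cos (π/7) ∧ Real.cos (π/7) < 0.90098 := by
  have hc := cos7_cubic
  have hlo : Real.sqrt 3 / 2 < Real.cos (π/7) := by
    have h6 : Real.cos (π/6) = Real.sqrt 3 / 2 := Real.cos_pi_div_six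
    rw [← h6]
    apply Real.cos_lt_cos_of_nonneg_of_le_pi
    · positivity
    · nlinarith [Real.pi_pos]
    · nlinarith [Real.pi_pos]
  have h3 : Real.sqrt 3 > 1.732 := by
    have := Real.sq_sqrt (show (3:ℝ) ≥ 0 by norm_num)
    nlinarith [Real.sqrt_nonneg 3]
  have hc1 : Real.cos (π/7) ≤ 1 := Real.cos_le_one _
  have hlo' : (0.866:ℝ) < Real.cos (π/7) := by nlinarith
  constructor
  · nlinarith [sq_nonneg (Real.cos (π/7) - 0.9), sq_nonneg (Real.cos (π/7) - 0.866)]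
  · nlinarith [sq_nonneg (Real.cos (π/7) - 0.901), sq_nonneg (Real.cos (π/7) - 1)]

theorem stmt15 :
    ∃ γ₀ : ℝ, γ₀ ∈ Set.Ioo (-0.25 : ℝ) (-0.2) ∧
      IsGreatest {μ : ℝ | μ ∈ (Zmat γ₀).charpoly.roots}
        (2 * Real.sqrt 2 * Real.cos (π / 7)) := by
  obtain ⟨hs1, hs2⟩ := sqrt2_bounds
  obtain ⟨hc1, hc2⟩ := cos7_bounds
  set μ : ℝ := 2 * Real.sqrt 2 * Real.cos (π / 7) with hμdef
  have hμlo : (2.5482:ℝ) < μ := by nlinarith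
  have hμhi : μ < 2.5484 := by nlinarith
  obtain ⟨d, hddef⟩ : ∃ d : ℝ, d = μ^2 - 2*μ - 1 := ⟨_, rfl⟩
  have hd0 : (0:ℝ) < d := by rw [hddef]; nlinarith
  obtain ⟨γ, hγdef⟩ : ∃ g : ℝ, g = μ - (2*μ - 4)/d := ⟨_, rfl⟩
  have hγlo : (-0.25:ℝ) < γ := by
    have h1 : (2*μ - 4)/d < μ + 0.25 := by
      rw [div_lt_iff₀ hd0, hddef]
      nlinarith [mul_pos (sub_pos.2 hμlo) (sub_pos.2 hμhi)]
    linarith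
  have hγhi : γ < -0.2 := by
    have h1 : μ + 0.2 < (2*μ - 4)/d := by
      rw [lt_div_iff₀ hd0, hddef]
      nlinarith [mul_pos (sub_pos.2 hμlo) (sub_pos.2 hμhi)]
    linarith
  have hpμ : (μ - γ) * (μ^2 - 2*μ - 1) - 2*μ + 4 = 0 := by
    have h1 : μ - γ = (2*μ - 4)/d := by rw [hγdef]; ring
    rw [h1, ← hddef, div_mul_cancel₀ _ (ne_of_gt hd0)]
    ring
  refine ⟨γ, ⟨hγlo, hγhi⟩, ?_, ?_⟩
  · show μ ∈ (Zmat γ).charpoly.roots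
    rw [Polynomial.mem_roots']
    exact ⟨(Matrix.charpoly_monic _).ne_zero, by
      rw [Polynomial.IsRoot, eval_cp]; exact hpμ⟩
  · intro t ht
    simp only [Set.mem_setOf_eq, Polynomial.mem_roots'] at ht
    have hpt : (t - γ) * (t^2 - 2*t - 1) - 2*t + 4 = 0 := by
      rw [← eval_cp γ t]; exact ht.2
    by_contra hle
    push_neg at hle
    have hq : t^2 + t*μ + μ^2 - (2+γ)*(t+μ) + 2*γ - 3 > 0 := by
      nlinarith [mul_pos (sub_pos.2 hle) (show (0:ℝ) < t + 2*μ - (2+γ) by linarith), sq_nonneg (μ - 2.5483)]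
    have hfact : (t - μ) * (t^2 + t*μ + μ^2 - (2+γ)*(t+μ) + 2*γ - 3) =
        ((t - γ) * (t^2 - 2*t - 1) - 2*t + 4) - ((μ - γ) * (μ^2 - 2*μ - 1) - 2*μ + 4) := by
      ring
    have hpos := mul_pos (sub_pos.2 hle) hq
    rw [hfact, hpt, hpμ] at hpos
    linarith
end
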